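/- Let F be a field and V be a finite-dimensional vector space over F with dim V ≥ 1. Let S be a trivial spectrum linear subspace of End(V). Then there exists a linear hyperplane H of V (a linear subspace of codimension 1) such that every vector x ∈ V with x ∉ H is S-adapted. -/

import Mathlib

lemma zmod_val_succ {k : ℕ} [NeZero k] (m : ZMod k) : (m + 1).val = (m.val + 1) % k := by
  rw [ZMod.val_add, ZMod.val_one_eq_one_mod]
  conv_rhs => rw [Nat.add_mod, Nat.mod_eq_of_lt m.val_lt]

/-- shortening a cycle through a chord -/
lemma cycle_shorten {ι : Type*} (E : ι → ι → Prop) {k : ℕ} [NeZero k]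
    (c : ZMod k → ι) (hc : ∀ j, E (c j) (c (j + 1)))
    (j l : ZMod k) (hjl : E (c j) (c l)) :
    ∃ c' : ZMod ((j - l).val + 1) → ι, ∀ m, E (c' m) (c' (m + 1)) := by
  set k' := (j - l).val + 1 with hk'
  haveI : NeZero k' := ⟨Nat.succ_ne_zero _⟩
  refine ⟨fun m => c (l + (m.val : ZMod k)), fun m => ?_⟩
  have hmlt : m.val < k' := m.val_lt
  rcases eq_or_lt_of_le (Nat.lt_succ_iff.mp hmlt) with hm | hm
  · -- last edge: the chord
    have h1 : l + ((m.val : ℕ) : ZMod k) = j := by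
      rw [hm, ZMod.natCast_zmod_val]; ring
    have h2 : (m + 1).val = 0 := by
      rw [zmod_val_succ, hm, hk', Nat.mod_self]
    simp only [h1, h2, Nat.cast_zero, add_zero]
    exact hjl
  · -- ordinary edge
    have h2 : (m + 1).val = m.val + 1 := by
      rw [zmod_val_succ, Nat.mod_eq_of_lt (by omega)]
    have h3 : ((m.val + 1 : ℕ) : ZMod k) = ((m.val : ℕ) : ZMod k) + 1 := by push_cast; ring
    beta_reduce
    rw [h2, h3, ← add_assoc]
    exact hc _

/-- existence of a cycle from a successor function on a finite type -/
lemma exists_cycle {ι : Type*} [Finite ι] [Nonempty ι] (g : ι → ι) :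
    ∃ k : ℕ, 0 < k ∧ ∃ c : ZMod k → ι, ∀ j, c (j + 1) = g (c j) := by
  obtain ⟨m, m', hne, heq⟩ := Finite.exists_ne_map_eq_of_infinite (fun n : ℕ => (Classical.arbitrary ι) |> (g^[n] ·))
  wlog hlt : m < m' generalizing m m'
  · exact this m' m hne.symm heq.symm (by omega)
  set i₀ := Classical.arbitrary ι
  set k := m' - m with hk
  have hk0 : 0 < k := by omega
  haveI : NeZero k := ⟨hk0.ne'⟩
  have hper : g^[k] (g^[m] i₀) = g^[m] i₀ := by
    rw [← Function.iterate_add_apply]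
    have : k + m = m' := by omega
    rw [this]; exact heq.symm
  refine ⟨k, hk0, fun j => g^[j.val] (g^[m] i₀), fun j => ?_⟩
  beta_reduce
  rw [zmod_val_succ]
  rcases eq_or_lt_of_le (Nat.succ_le_of_lt j.val_lt) with h | h
  · have h0 : (j.val + 1) % k = 0 := by
      have : j.val + 1 = k := h
      rw [this, Nat.mod_self]
    rw [h0]
    simp only [Function.iterate_zero, id]
    rw [← Function.iterate_succ_apply' g j.val]
    have h1 : j.val.succ = k := h
    rw [h1]
    exact hper.symm
  · rw [Nat.mod_eq_of_lt h, Function.iterate_succ_apply' g j.val]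

/-- existence of a chord-free (hence injective) cycle for a relation with no dead ends -/
lemma exists_chordfree_cycle {ι : Type*} [Finite ι] [Nonempty ι] (E : ι → ι → Prop)
    (hE : ∀ i, ∃ j, E i j) :
    ∃ (k : ℕ) (_ : NeZero k) (c : ZMod k → ι),
      (∀ j, E (c j) (c (j + 1))) ∧ (∀ j l, E (c j) (c l) → l = j + 1) ∧
      Function.Injective c := by
  classical
  choose g hg using hE
  have hP : ∃ k : ℕ, 0 < k ∧ ∃ c : ZMod k → ι, ∀ j, E (c j) (c (j + 1)) := by
    obtain ⟨k, hk0, c, hc⟩ := exists_cycle g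
    exact ⟨k, hk0, c, fun j => by rw [hc j]; exact hg (c j)⟩
  set k := Nat.find hP with hkdef
  obtain ⟨hk0, c, hc⟩ := Nat.find_spec hP
  haveI : NeZero k := ⟨hk0.ne'⟩
  have hcf : ∀ j l, E (c j) (c l) → l = j + 1 := by
    intro j l hjl
    by_contra hne
    obtain ⟨c', hc'⟩ := cycle_shorten E c hc j l hjl
    have hlt : (j - l).val + 1 < k := by
      have h1 : (j - l).val < k := ZMod.val_lt _
      have h2 : (j - l).val ≠ k - 1 := by
        intro hv
        apply hne
        have : ((j - l).val : ZMod k) = j - l := ZMod.natCast_zmod_val _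
        rw [hv] at this
        have hm1 : ((k - 1 : ℕ) : ZMod k) = -1 := by
          have h1k : 1 ≤ k := hk0
          rw [Nat.cast_sub h1k, ZMod.natCast_self, Nat.cast_one, zero_sub]
        rw [hm1] at this
        linear_combination this
      omega
    exact Nat.find_min hP hlt ⟨Nat.succ_pos _, c', hc'⟩
  refine ⟨k, inferInstance, c, hc, hcf, ?_⟩
  intro a b hab
  have h1 : E (c (b - 1)) (c a) := by
    rw [hab]
    have := hc (b - 1)
    simpa using this
  have := hcf (b - 1) a h1
  rw [this]; ring

/-- Let V be a finite-dimensional vector space over a field F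
with dim V ≥ 1, and S a trivial spectrum linear subspace of End(V). Then there
is a linear hyperplane H of V (here given as the kernel of a nonzero linear
functional) such that every x ∈ V outside H is S-adapted, i.e. S contains no
nonzero endomorphism whose range equals the line F·x. -/
theorem stmt_17 (F V : Type) [Field F] [AddCommGroup V] [Module F V]
    [FiniteDimensional F V] (hV : 1 ≤ Module.finrank F V)
    (S : Submodule F (V →ₗ[F] V))
    (hS : ∀ f ∈ S, ∀ μ : F, μ ≠ 0 → ∀ x : V, f x = μ • x → x = 0) :
    ∃ φ : V →ₗ[F] F, φ ≠ 0 ∧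
      ∀ x : V, x ∉ LinearMap.ker φ →
        ∀ f ∈ S, f ≠ 0 → LinearMap.range f ≠ Submodule.span F {x} := by
  classical
  set B : Set V := {x : V | ∃ f ∈ S, f ≠ 0 ∧ LinearMap.range f = Submodule.span F {x}} with hBdef
  suffices hlt : Submodule.span F B ≠ ⊤ by
    obtain ⟨φ, hφ0, hφ⟩ := Submodule.exists_dual_map_eq_bot_of_lt_top
      (lt_top_iff_ne_top.mpr hlt) inferInstance
    refine ⟨φ, hφ0, ?_⟩
    intro x hx f hf hf0 hr
    apply hx
    have hxB : x ∈ B := ⟨f, hf, hf0, hr⟩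
    have hmem : φ x ∈ Submodule.map φ (Submodule.span F B) :=
      ⟨x, Submodule.subset_span hxB, rfl⟩
    rw [hφ] at hmem
    exact LinearMap.mem_ker.mpr ((Submodule.mem_bot F).mp hmem)
  intro hT
  obtain ⟨bs, hbsB, hbspan, hbli⟩ := exists_linearIndependent F B
  rw [hT] at hbspan
  let b : Module.Basis bs F V := Module.Basis.mk hbli (by rw [Subtype.range_coe, hbspan])
  haveI : Fintype bs := FiniteDimensional.fintypeBasisIndex b
  haveI : Nonempty bs := by
    rw [← Fintype.card_pos_iff]
    have hcard := Module.finrank_eq_card_basis b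
    omega
  -- rank-one data for each basis vector
  have hdata : ∀ i : bs, ∃ (f : V →ₗ[F] V) (ψ : V →ₗ[F] F), f ∈ S ∧ ψ ≠ 0 ∧
      ψ (i : V) = 0 ∧ ∀ v, f v = ψ v • (i : V) := by
    intro i
    obtain ⟨f, hfS, hf0, hr⟩ := hbsB i.2
    have hx0 : (i : V) ≠ 0 := by
      have := b.ne_zero i
      rwa [Module.Basis.mk_apply] at this
    have hmemr : ∀ v, f v ∈ Submodule.span F {(i : V)} := by
      intro v; rw [← hr]; exact LinearMap.mem_range_self f v
    set ψ : V →ₗ[F] F := (LinearEquiv.coord F V (i : V) hx0).toLinearMap ∘ₗ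
      (f.codRestrict (Submodule.span F {(i : V)}) hmemr) with hψdef
    have hfv : ∀ v, f v = ψ v • (i : V) := by
      intro v
      exact (LinearEquiv.coord_apply_smul F V (i : V) hx0 ⟨f v, hmemr v⟩).symm
    have hψ0 : ψ ≠ 0 := by
      intro h
      apply hf0
      ext v
      rw [hfv v, h]
      simp
    have hψx : ψ (i : V) = 0 := by
      by_contra h
      exact hx0 (hS f hfS (ψ (i : V)) h (i : V) (hfv (i : V)))
    exact ⟨f, ψ, hfS, hψ0, hψx, hfv⟩
  choose fn ψn hfS hψ0 hψx hfψ using hdata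
  -- the digraph
  set E : bs → bs → Prop := fun i j => ψn i (j : V) ≠ 0 with hEdef
  have hE : ∀ i, ∃ j, E i j := by
    intro i
    by_contra h
    push_neg at h
    apply hψ0 i
    apply b.ext
    intro j
    rw [Module.Basis.mk_apply]
    simp only [LinearMap.zero_apply]
    exact not_not.mp (h j)
  obtain ⟨k, hkNZ, c, hc, hcf, hcinj⟩ := exists_chordfree_cycle E hE
  haveI : NeZero k := hkNZ
  set d : ZMod k → F := fun j => ψn (c j) ((c (j + 1)) : V) with hddef
  have hd : ∀ j, d j ≠ 0 := fun j => hc j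
  set f : V →ₗ[F] V := ∑ j : ZMod k, (d j)⁻¹ • fn (c j) with hfdef
  have hfmem : f ∈ S :=
    Submodule.sum_mem _ (fun j _ => Submodule.smul_mem _ _ (hfS (c j)))
  set v : V := ∑ j : ZMod k, ((c j : bs) : V) with hvdef
  have hψv : ∀ j, ψn (c j) v = d j := by
    intro j
    rw [hvdef, map_sum]
    rw [Finset.sum_eq_single (j + 1)]
    · intro l _ hl
      by_contra h
      exact hl (hcf j l h)
    · intro h
      exact absurd (Finset.mem_univ _) h
  have hfv : f v = v := by
    rw [hfdef, LinearMap.sum_apply]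
    have : ∀ j : ZMod k, ((d j)⁻¹ • fn (c j)) v = ((c j : bs) : V) := by
      intro j
      rw [LinearMap.smul_apply, hfψ (c j) v, hψv j, smul_smul,
        inv_mul_cancel₀ (hd j), one_smul]
    rw [Finset.sum_congr rfl (fun j _ => this j)]
  have hv0 : v = 0 := hS f hfmem 1 one_ne_zero v (by rw [hfv, one_smul])
  have hrepr : b.repr v (c 0) = 1 := by
    have hvb : v = ∑ j : ZMod k, b (c j) := by
      rw [hvdef]
      exact Finset.sum_congr rfl (fun j _ => (Module.Basis.mk_apply hbli _ _).symm)
    rw [hvb, map_sum]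
    rw [Finset.sum_apply']
    rw [Finset.sum_eq_single 0]
    · rw [Module.Basis.repr_self, Finsupp.single_apply, if_pos rfl]
    · intro l _ hl
      rw [Module.Basis.repr_self, Finsupp.single_apply, if_neg (fun h => hl (hcinj h))]
    · intro h
      exact absurd (Finset.mem_univ _) h
  rw [hv0] at hrepr
  simp at hrepr
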